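/- Define 𝕘(u_{j−r},…,u_{j+r−1}) = Σ_{k=1}^{r∨1} Σ_{l=1}^{k} g(u_{j−l}, u_{j−l+k}) W_k Δx. Then the nonlocal scheme u_j^{n+1} = u_j^n − Δt Σ_{k=1}^{r∨1} W_k (g(u_j^n, u_{j+k}^n) − g(u_{j−k}^n, u_j^n)) can be rewritten in the (2r)-point conservative form u_j^{n+1} = u_j^n − (Δt/Δx)(𝕘(u_{j−r+1}^n,…,u_{j+r}^n) − 𝕘(u_{j−r}^n,…,u_{j+r−1}^n)); moreover 𝕘 is Lipschitz continuous (since g is) and consistent with the local flux f: 𝕘(u,…,u) = f(u). -/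

import Mathlib

open MeasureTheory Real Set Filter Topology

noncomputable section

/-- The nonlocal entropy flux `q(a,b;c) = g(a ⊔ c, b ⊔ c) - g(a ⊓ c, b ⊓ c)`. -/
def entFlux (g : ℝ → ℝ → ℝ) (a b c : ℝ) : ℝ :=
  g (max a c) (max b c) - g (min a c) (min b c)

/-- An admissible nonlocal interaction kernel with horizon `δ`. -/
structure AdmissibleKernel (δ : ℝ) (ω : ℝ → ℝ) : Prop where
  nonneg : ∀ h, 0 ≤ ω h
  integrable : Integrable ω
  supp : ∀ h, h ∉ Set.Icc 0 δ → ω h = 0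
  normalized : (∫ h in (0:ℝ)..δ, ω h) = 1

/-- `r = ⌊δ / Δx⌋`. -/
def gridR (δ Δx : ℝ) : ℕ := ⌊δ / Δx⌋₊

/-- `r ∨ 1 = max r 1`. -/
def gridR1 (δ Δx : ℝ) : ℕ := max (gridR δ Δx) 1

/-- The quadrature weights `W_k`. -/
def qWeight (ω : ℝ → ℝ) (δ Δx : ℝ) (k : ℕ) : ℝ :=
  (1 / ((k : ℝ) * Δx)) * (∫ h in (((k : ℝ) - 1) * Δx)..((k : ℝ) * Δx), ω h)
    + (if k = gridR δ Δx then 1 else 0) / ((gridR1 δ Δx : ℝ) * Δx)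
        * (∫ h in ((gridR δ Δx : ℝ) * Δx)..δ, ω h)

/-- One step of the nonlocal scheme `H`. -/
def schemeStep (g : ℝ → ℝ → ℝ) (Δt : ℝ) (W : ℕ → ℝ) (R : ℕ) (v : ℤ → ℝ) (j : ℤ) : ℝ :=
  v j - Δt * ∑ k ∈ Finset.Icc 1 R,
    W k * (g (v j) (v (j + (k : ℤ))) - g (v (j - (k : ℤ))) (v j))

/-- Iterates of the nonlocal scheme. -/
def schemeSol (g : ℝ → ℝ → ℝ) (Δt : ℝ) (W : ℕ → ℝ) (R : ℕ) (v0 : ℤ → ℝ) : ℕ → ℤ → ℝ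
  | 0 => v0
  | n + 1 => schemeStep g Δt W R (schemeSol g Δt W R v0 n)

/-- Cell averages of the initial data. -/
def cellAvg (u₀ : ℝ → ℝ) (Δx : ℝ) (j : ℤ) : ℝ :=
  (1 / Δx) * ∫ x in (((j : ℝ) - 1/2) * Δx)..(((j : ℝ) + 1/2) * Δx), u₀ x

/-- The numerical solution of the nonlocal scheme with initial data `u₀`. -/
def numSol (g : ℝ → ℝ → ℝ) (ω : ℝ → ℝ) (δ Δx Δt : ℝ) (u₀ : ℝ → ℝ) : ℕ → ℤ → ℝ :=
  schemeSol g Δt (qWeight ω δ Δx) (gridR1 δ Δx) (cellAvg u₀ Δx)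

/-- Piecewise constant interpolant of a grid function. -/
def pcInterp (Δx Δt : ℝ) (v : ℕ → ℤ → ℝ) (x t : ℝ) : ℝ :=
  v ⌊t / Δt⌋₊ ⌊x / Δx + 1/2⌋

/-- The piecewise-constant numerical solution `u^{Δ,δ}`. -/
def numInterp (g : ℝ → ℝ → ℝ) (ω : ℝ → ℝ) (δ Δx Δt : ℝ) (u₀ : ℝ → ℝ) (x t : ℝ) : ℝ :=
  pcInterp Δx Δt (numSol g ω δ Δx Δt u₀) x t

/-- `h^Δ(h) = kΔx` for `h ∈ [(k-1)Δx, kΔx)`. -/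
def hDelta (Δx h : ℝ) : ℝ := ((⌊h / Δx⌋ : ℝ) + 1) * Δx

/-- Interpolant of the test function: affine in `x` on each grid cell, piecewise
constant in `t`. -/
def phiDelta (φ : ℝ → ℝ → ℝ) (Δx Δt : ℝ) (x t : ℝ) : ℝ :=
  φ (((⌊x / Δx + 1/2⌋ : ℝ) - 1/2) * Δx) ((⌊t / Δt⌋₊ : ℝ) * Δt)
    + ((x - ((⌊x / Δx + 1/2⌋ : ℝ) - 1/2) * Δx) / Δx)
      * (φ (((⌊x / Δx + 1/2⌋ : ℝ) + 1/2) * Δx) ((⌊t / Δt⌋₊ : ℝ) * Δt)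
          - φ (((⌊x / Δx + 1/2⌋ : ℝ) - 1/2) * Δx) ((⌊t / Δt⌋₊ : ℝ) * Δt))

/-- The `2r`-point numerical flux `𝕘`. -/
def bigFlux (g : ℝ → ℝ → ℝ) (W : ℕ → ℝ) (Δx : ℝ) (R : ℕ) (v : ℤ → ℝ) (j : ℤ) : ℝ :=
  ∑ k ∈ Finset.Icc 1 R, ∑ l ∈ Finset.Icc 1 k,
    g (v (j - (l : ℤ))) (v (j - (l : ℤ) + (k : ℤ))) * W k * Δx

/-- Supremum of `|∂₁ g|` over `[B₁,B₂] × [B₁,B₂]`. -/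
def supAbsDeriv1 (g : ℝ → ℝ → ℝ) (B₁ B₂ : ℝ) : ℝ :=
  sSup ((fun p : ℝ × ℝ => |derivWithin (fun a => g a p.2) (Set.Icc B₁ B₂) p.1|) ''
    (Set.Icc B₁ B₂ ×ˢ Set.Icc B₁ B₂))

/-- Supremum of `|∂₂ g|` over `[B₁,B₂] × [B₁,B₂]`. -/
def supAbsDeriv2 (g : ℝ → ℝ → ℝ) (B₁ B₂ : ℝ) : ℝ :=
  sSup ((fun p : ℝ × ℝ => |derivWithin (fun b => g p.1 b) (Set.Icc B₁ B₂) p.2|) ''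
    (Set.Icc B₁ B₂ ×ˢ Set.Icc B₁ B₂))

/-- Entropy solution of the nonlocal conservation law on `ℝ × [0,T]`. -/
structure IsEntropySolNonlocal (T δ : ℝ) (ω : ℝ → ℝ) (g : ℝ → ℝ → ℝ)
    (u₀ : ℝ → ℝ) (u : ℝ → ℝ → ℝ) : Prop where
  bounded : ∃ M, ∀ x t, |u x t| ≤ M
  integrable : ∀ t ∈ Set.Icc (0:ℝ) T, Integrable (fun x => u x t)
  contL1 : ∀ t₀ ∈ Set.Icc (0:ℝ) T,
    Tendsto (fun t => ∫ x : ℝ, |u x t - u x t₀|) (nhdsWithin t₀ (Set.Icc 0 T)) (nhds 0)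
  init : ∀ x, u x 0 = u₀ x
  entropy : ∀ φ : ℝ → ℝ → ℝ, ContDiff ℝ 1 (fun p : ℝ × ℝ => φ p.1 p.2) →
    HasCompactSupport (fun p : ℝ × ℝ => φ p.1 p.2) → (∀ x t, 0 ≤ φ x t) → ∀ c : ℝ,
    0 ≤ (∫ t in (0:ℝ)..T, ∫ x : ℝ, |u x t - c| * deriv (fun s => φ x s) t)
      + ∫ t in (0:ℝ)..T, ∫ x : ℝ, ∫ h in (0:ℝ)..δ,
          ((φ (x + h) t - φ x t) / h) * entFlux g (u x t) (u (x + h) t) c * ω h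

/-- Kruzhkov entropy solution of the local conservation law `u_t + f(u)_x = 0`. -/
structure IsEntropySolLocal (T : ℝ) (f : ℝ → ℝ) (u₀ : ℝ → ℝ) (u : ℝ → ℝ → ℝ) : Prop where
  bounded : ∃ M, ∀ x t, |u x t| ≤ M
  integrable : ∀ t ∈ Set.Icc (0:ℝ) T, Integrable (fun x => u x t)
  contL1 : ∀ t₀ ∈ Set.Icc (0:ℝ) T,
    Tendsto (fun t => ∫ x : ℝ, |u x t - u x t₀|) (nhdsWithin t₀ (Set.Icc 0 T)) (nhds 0)
  init : ∀ x, u x 0 = u₀ x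
  entropy : ∀ φ : ℝ → ℝ → ℝ, ContDiff ℝ 1 (fun p : ℝ × ℝ => φ p.1 p.2) →
    HasCompactSupport (fun p : ℝ × ℝ => φ p.1 p.2) → (∀ x t, 0 ≤ φ x t) → ∀ c : ℝ,
    0 ≤ ∫ t in (0:ℝ)..T, ∫ x : ℝ,
        (|u x t - c| * deriv (fun s => φ x s) t
          + Real.sign (u x t - c) * (f (u x t) - f c) * deriv (fun y => φ y t) x)


-- telescoping
lemma telescope_aux (a : ℕ → ℝ) (k : ℕ) :
    ∑ l ∈ Finset.Icc 1 k, (a (l - 1) - a l) = a 0 - a k := by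
  rw [← Finset.Ico_add_one_right_eq_Icc, Finset.sum_Ico_eq_sum_range]
  have : ∀ i, a (1 + i - 1) - a (1 + i) = a i - a (i + 1) := by
    intro i; congr 1 <;> congr 1 <;> omega
  simp_rw [this]
  have h2 : k + 1 - 1 = k := by omega
  rw [h2]
  exact Finset.sum_range_sub' a k

lemma weight_norm (δ Δx : ℝ) (hδ : 0 < δ) (hΔx : 0 < Δx) (ω : ℝ → ℝ)
    (hω : AdmissibleKernel δ ω) :
    ∑ k ∈ Finset.Icc 1 (gridR1 δ Δx), (k : ℝ) * Δx * qWeight ω δ Δx k = 1 := by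
  set r := gridR δ Δx with hr
  set R := gridR1 δ Δx with hR
  have hR1 : 1 ≤ R := le_max_right _ _
  have hint : ∀ a b : ℝ, IntervalIntegrable ω volume a b :=
    fun a b => hω.integrable.intervalIntegrable
  have hterm : ∀ k ∈ Finset.Icc 1 R, (k : ℝ) * Δx * qWeight ω δ Δx k
      = (∫ h in (((k : ℝ) - 1) * Δx)..((k : ℝ) * Δx), ω h)
        + (if k = r then ((k : ℝ) / (R : ℝ)) * (∫ h in ((r : ℝ) * Δx)..δ, ω h) else 0) := by
    intro k hk
    have hk1 : 1 ≤ k := (Finset.mem_Icc.mp hk).1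
    have hk0 : (k : ℝ) ≠ 0 := Nat.cast_ne_zero.mpr (by omega)
    have hR0 : (R : ℝ) ≠ 0 := Nat.cast_ne_zero.mpr (by omega)
    unfold qWeight
    rw [← hr, ← hR]
    split_ifs with h
    · field_simp
    · field_simp
      ring
  rw [Finset.sum_congr rfl hterm, Finset.sum_add_distrib]
  have hsum1 : ∑ k ∈ Finset.Icc 1 R, (∫ h in (((k : ℝ) - 1) * Δx)..((k : ℝ) * Δx), ω h)
      = ∫ h in (0:ℝ)..((R : ℝ) * Δx), ω h := by
    rw [← Finset.Ico_add_one_right_eq_Icc, Finset.sum_Ico_eq_sum_range]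
    have : ∀ i ∈ Finset.range (R + 1 - 1),
        (∫ h in ((((1 + i : ℕ) : ℝ) - 1) * Δx)..(((1 + i : ℕ) : ℝ) * Δx), ω h)
        = ∫ h in ((i : ℝ) * Δx)..(((i + 1 : ℕ) : ℝ) * Δx), ω h := by
      intro i _; push_cast; ring_nf
    rw [Finset.sum_congr rfl this]
    have := intervalIntegral.sum_integral_adjacent_intervals
      (a := fun i : ℕ => (i : ℝ) * Δx) (f := ω) (μ := volume) (n := R)
      (fun k _ => hint _ _)
    simpa using this
  have hsum2 : ∑ k ∈ Finset.Icc 1 R,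
      (if k = r then ((k : ℝ) / (R : ℝ)) * (∫ h in ((r : ℝ) * Δx)..δ, ω h) else 0)
      = if r ∈ Finset.Icc 1 R then ((r : ℝ) / (R : ℝ)) * (∫ h in ((r : ℝ) * Δx)..δ, ω h) else 0 := by
    rw [Finset.sum_ite_eq' (Finset.Icc 1 R) r
      (fun k => ((k : ℝ) / (R : ℝ)) * (∫ h in ((r : ℝ) * Δx)..δ, ω h))]
  rw [hsum1, hsum2]
  by_cases hr0 : r = 0
  · -- R = 1, δ < Δx
    have hRe : R = 1 := by
      rw [hR]; show max (gridR δ Δx) 1 = 1; rw [← hr, hr0]; simp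
    have hδΔx : δ < Δx := by
      by_contra h
      push_neg at h
      have : 1 ≤ δ / Δx := (one_le_div hΔx).mpr h
      have : 1 ≤ r := by
        rw [hr]; exact Nat.le_floor (by exact_mod_cast this)
      omega
    have hnot : r ∉ Finset.Icc 1 R := by simp [hr0]
    rw [if_neg hnot, hRe]
    have hsplit : (∫ h in (0:ℝ)..((1:ℕ) * Δx : ℝ), ω h)
        = (∫ h in (0:ℝ)..δ, ω h) + ∫ h in δ..Δx, ω h := by
      push_cast
      rw [one_mul, ← intervalIntegral.integral_add_adjacent_intervals (hint 0 δ) (hint δ Δx)]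
    have hzero : (∫ h in δ..Δx, ω h) = 0 := by
      have : ∀ h ∈ Set.Ioc δ Δx, ω h = 0 := by
        intro h hh
        exact hω.supp h (by simp [Set.mem_Icc]; intro _; exact hh.1)
      rw [intervalIntegral.integral_of_le hδΔx.le]
      rw [MeasureTheory.setIntegral_eq_zero_of_forall_eq_zero]
      intro x hx; exact this x hx
    push_cast
    push_cast at hsplit
    rw [hsplit, hzero, hω.normalized]
    ring
  · -- r ≥ 1, R = r
    have hRe : R = r := by
      rw [hR]; show max (gridR δ Δx) 1 = r; rw [← hr]; omega
    have hmem : r ∈ Finset.Icc 1 R := by rw [hRe]; simp; omega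
    rw [if_pos hmem, hRe]
    have hr0' : (r : ℝ) ≠ 0 := Nat.cast_ne_zero.mpr hr0
    rw [div_self hr0', one_mul]
    rw [← hω.normalized]
    rw [← intervalIntegral.integral_add_adjacent_intervals (hint 0 ((r:ℝ)*Δx)) (hint ((r:ℝ)*Δx) δ)]

lemma qWeight_nonneg (δ Δx : ℝ) (hδ : 0 < δ) (hΔx : 0 < Δx) (ω : ℝ → ℝ)
    (hω : AdmissibleKernel δ ω) (k : ℕ) : 0 ≤ qWeight ω δ Δx k := by
  unfold qWeight
  have h1 : ((k : ℝ) - 1) * Δx ≤ (k : ℝ) * Δx := by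
    apply mul_le_mul_of_nonneg_right _ hΔx.le; linarith
  have hrδ : (gridR δ Δx : ℝ) * Δx ≤ δ := by
    have : (gridR δ Δx : ℝ) ≤ δ / Δx := Nat.floor_le (by positivity)
    calc (gridR δ Δx : ℝ) * Δx ≤ (δ / Δx) * Δx := by
          exact mul_le_mul_of_nonneg_right this hΔx.le
      _ = δ := by field_simp
  apply add_nonneg
  · apply mul_nonneg (by positivity)
    exact intervalIntegral.integral_nonneg h1 (fun x _ => hω.nonneg x)
  · apply mul_nonneg
    · apply div_nonneg (by positivity) (by positivity)
    · exact intervalIntegral.integral_nonneg hrδ (fun x _ => hω.nonneg x)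


/-- the nonlocal scheme can be rewritten in `(2r)`-point conservative
form with a Lipschitz continuous and consistent numerical flux `𝕘`. -/
theorem conservative_form
    (δ Δx Δt : ℝ) (hδ : 0 < δ) (hΔx : 0 < Δx) (hΔt : 0 < Δt)
    (ω : ℝ → ℝ) (hω : AdmissibleKernel δ ω)
    (f : ℝ → ℝ) (g : ℝ → ℝ → ℝ) (C : ℝ)
    (hcons : ∀ x, g x x = f x)
    (hLip : ∀ a b c d, |g a b - g c d| ≤ C * (|a - c| + |b - d|))
    (hmono1 : ∀ a a' b, a ≤ a' → g a b ≤ g a' b)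
    (hmono2 : ∀ a b b', b ≤ b' → g a b' ≤ g a b)
    :
    (∀ v : ℤ → ℝ, ∀ j : ℤ,
      schemeStep g Δt (qWeight ω δ Δx) (gridR1 δ Δx) v j
        = v j - Δt / Δx * (bigFlux g (qWeight ω δ Δx) Δx (gridR1 δ Δx) v (j + 1)
            - bigFlux g (qWeight ω δ Δx) Δx (gridR1 δ Δx) v j)) ∧
    (∃ C' : ℝ, ∀ v w : ℤ → ℝ, ∀ j : ℤ,
      |bigFlux g (qWeight ω δ Δx) Δx (gridR1 δ Δx) v j
          - bigFlux g (qWeight ω δ Δx) Δx (gridR1 δ Δx) w j|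
        ≤ C' * ∑ i ∈ Finset.Icc (j - (gridR1 δ Δx : ℤ)) (j + (gridR1 δ Δx : ℤ) - 1),
            |v i - w i|) ∧
    (∀ a : ℝ, ∀ j : ℤ,
      bigFlux g (qWeight ω δ Δx) Δx (gridR1 δ Δx) (fun _ => a) j = f a) := by
  have hnorm := weight_norm δ Δx hδ hΔx ω hω
  have hWnn : ∀ k, 0 ≤ qWeight ω δ Δx k := fun k => qWeight_nonneg δ Δx hδ hΔx ω hω k
  set R := gridR1 δ Δx with hRdef
  have hR1 : 1 ≤ R := le_max_right _ _
  set W := qWeight ω δ Δx with hWdef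
  refine ⟨?_, ?_, ?_⟩
  · -- conservative form
    intro v j
    have hdiff : bigFlux g W Δx R v (j + 1) - bigFlux g W Δx R v j
        = Δx * ∑ k ∈ Finset.Icc 1 R,
            W k * (g (v j) (v (j + (k : ℤ))) - g (v (j - (k : ℤ))) (v j)) := by
      unfold bigFlux
      rw [← Finset.sum_sub_distrib, Finset.mul_sum]
      refine Finset.sum_congr rfl fun k hk => ?_
      rw [← Finset.sum_sub_distrib]
      have e1 : ∀ l ∈ Finset.Icc 1 k,
          g (v (j + 1 - (l : ℤ))) (v (j + 1 - (l : ℤ) + (k : ℤ))) * W k * Δx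
            - g (v (j - (l : ℤ))) (v (j - (l : ℤ) + (k : ℤ))) * W k * Δx
          = ((fun m : ℕ => g (v (j - (m : ℤ))) (v (j - (m : ℤ) + (k : ℤ))) * W k * Δx) (l - 1)
            - (fun m : ℕ => g (v (j - (m : ℤ))) (v (j - (m : ℤ) + (k : ℤ))) * W k * Δx) l) := by
        intro l hl
        have hl1 : 1 ≤ l := (Finset.mem_Icc.mp hl).1
        simp only
        have hca : ((l - 1 : ℕ) : ℤ) = (l : ℤ) - 1 := by
          push_cast [hl1]; ring
        rw [hca]
        have h1 : j - ((l : ℤ) - 1) = j + 1 - (l : ℤ) := by ring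
        rw [h1]
      have htel := telescope_aux
        (fun m : ℕ => g (v (j - (m : ℤ))) (v (j - (m : ℤ) + (k : ℤ))) * W k * Δx) k
      rw [Finset.sum_congr rfl e1, htel]
      simp only [Nat.cast_zero, sub_zero]
      have h3 : j - (k : ℤ) + (k : ℤ) = j := by ring
      rw [h3]
      ring
    rw [hdiff]
    unfold schemeStep
    have : Δt / Δx * (Δx * ∑ k ∈ Finset.Icc 1 R,
        W k * (g (v j) (v (j + (k : ℤ))) - g (v (j - (k : ℤ))) (v j)))
        = Δt * ∑ k ∈ Finset.Icc 1 R,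
        W k * (g (v j) (v (j + (k : ℤ))) - g (v (j - (k : ℤ))) (v j)) := by
      field_simp
    rw [this]
  · -- Lipschitz
    refine ⟨2 * C, fun v w j => ?_⟩
    have hC : 0 ≤ C := by
      have h := hLip 0 0 1 0
      norm_num at h
      exact le_trans (abs_nonneg _) h
    set S := ∑ i ∈ Finset.Icc (j - (R : ℤ)) (j + (R : ℤ) - 1), |v i - w i| with hS
    have hSnn : 0 ≤ S := Finset.sum_nonneg fun i _ => abs_nonneg _
    have hsingle : ∀ i ∈ Finset.Icc (j - (R : ℤ)) (j + (R : ℤ) - 1), |v i - w i| ≤ S :=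
      fun i hi => Finset.single_le_sum (f := fun i => |v i - w i|)
        (fun i _ => abs_nonneg _) hi
    unfold bigFlux
    rw [← Finset.sum_sub_distrib]
    calc |∑ k ∈ Finset.Icc 1 R,
          ((∑ l ∈ Finset.Icc 1 k, g (v (j - (l:ℤ))) (v (j - (l:ℤ) + (k:ℤ))) * W k * Δx)
            - ∑ l ∈ Finset.Icc 1 k, g (w (j - (l:ℤ))) (w (j - (l:ℤ) + (k:ℤ))) * W k * Δx)|
        ≤ ∑ k ∈ Finset.Icc 1 R,
          |(∑ l ∈ Finset.Icc 1 k, g (v (j - (l:ℤ))) (v (j - (l:ℤ) + (k:ℤ))) * W k * Δx)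
            - ∑ l ∈ Finset.Icc 1 k, g (w (j - (l:ℤ))) (w (j - (l:ℤ) + (k:ℤ))) * W k * Δx| :=
          Finset.abs_sum_le_sum_abs _ _
      _ ≤ ∑ k ∈ Finset.Icc 1 R, (k : ℝ) * Δx * W k * (2 * C * S) := by
          refine Finset.sum_le_sum fun k hk => ?_
          obtain ⟨hk1, hkR⟩ := Finset.mem_Icc.mp hk
          rw [← Finset.sum_sub_distrib]
          calc |∑ l ∈ Finset.Icc 1 k,
                (g (v (j - (l:ℤ))) (v (j - (l:ℤ) + (k:ℤ))) * W k * Δx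
                  - g (w (j - (l:ℤ))) (w (j - (l:ℤ) + (k:ℤ))) * W k * Δx)|
              ≤ ∑ l ∈ Finset.Icc 1 k,
                |g (v (j - (l:ℤ))) (v (j - (l:ℤ) + (k:ℤ))) * W k * Δx
                  - g (w (j - (l:ℤ))) (w (j - (l:ℤ) + (k:ℤ))) * W k * Δx| :=
                Finset.abs_sum_le_sum_abs _ _
            _ ≤ ∑ l ∈ Finset.Icc 1 k, (2 * C * S) * (W k * Δx) := by
                refine Finset.sum_le_sum fun l hl => ?_
                obtain ⟨hl1, hlk⟩ := Finset.mem_Icc.mp hl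
                have habs : |g (v (j - (l:ℤ))) (v (j - (l:ℤ) + (k:ℤ))) * W k * Δx
                    - g (w (j - (l:ℤ))) (w (j - (l:ℤ) + (k:ℤ))) * W k * Δx|
                    = |g (v (j - (l:ℤ))) (v (j - (l:ℤ) + (k:ℤ)))
                      - g (w (j - (l:ℤ))) (w (j - (l:ℤ) + (k:ℤ)))| * (W k * Δx) := by
                  rw [show g (v (j - (l:ℤ))) (v (j - (l:ℤ) + (k:ℤ))) * W k * Δx
                    - g (w (j - (l:ℤ))) (w (j - (l:ℤ) + (k:ℤ))) * W k * Δx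
                    = (g (v (j - (l:ℤ))) (v (j - (l:ℤ) + (k:ℤ)))
                      - g (w (j - (l:ℤ))) (w (j - (l:ℤ) + (k:ℤ)))) * (W k * Δx) by ring]
                  rw [abs_mul, abs_of_nonneg (mul_nonneg (hWnn k) hΔx.le)]
                rw [habs]
                apply mul_le_mul_of_nonneg_right _ (mul_nonneg (hWnn k) hΔx.le)
                have hm1 : (j - (l:ℤ)) ∈ Finset.Icc (j - (R : ℤ)) (j + (R : ℤ) - 1) := by
                  rw [Finset.mem_Icc]
                  constructor <;> [omega; omega]
                have hm2 : (j - (l:ℤ) + (k:ℤ)) ∈ Finset.Icc (j - (R : ℤ)) (j + (R : ℤ) - 1) := by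
                  rw [Finset.mem_Icc]
                  constructor <;> [omega; omega]
                calc |g (v (j - (l:ℤ))) (v (j - (l:ℤ) + (k:ℤ)))
                    - g (w (j - (l:ℤ))) (w (j - (l:ℤ) + (k:ℤ)))|
                    ≤ C * (|v (j - (l:ℤ)) - w (j - (l:ℤ))|
                      + |v (j - (l:ℤ) + (k:ℤ)) - w (j - (l:ℤ) + (k:ℤ))|) := hLip _ _ _ _
                  _ ≤ C * (S + S) := by
                      apply mul_le_mul_of_nonneg_left _ hC
                      exact add_le_add (hsingle _ hm1) (hsingle _ hm2)
                  _ = 2 * C * S := by ring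
            _ = (k : ℝ) * Δx * W k * (2 * C * S) := by
                rw [Finset.sum_const, Nat.card_Icc]
                simp only [Nat.add_sub_cancel, nsmul_eq_mul]
                ring
      _ = (2 * C) * S := by
          rw [show ∑ k ∈ Finset.Icc 1 R, (k : ℝ) * Δx * W k * (2 * C * S)
            = (∑ k ∈ Finset.Icc 1 R, (k : ℝ) * Δx * W k) * (2 * C * S) by
              rw [Finset.sum_mul]]
          rw [hnorm]
          ring
  · -- consistency
    intro a j
    unfold bigFlux
    have : ∀ k ∈ Finset.Icc 1 R,
        ∑ l ∈ Finset.Icc 1 k, g a a * W k * Δx = (k : ℝ) * Δx * W k * f a := by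
      intro k _
      rw [Finset.sum_const, Nat.card_Icc, hcons]
      simp only [Nat.add_sub_cancel, nsmul_eq_mul]
      ring
    rw [Finset.sum_congr rfl this]
    rw [show ∑ k ∈ Finset.Icc 1 R, (k : ℝ) * Δx * W k * f a
      = (∑ k ∈ Finset.Icc 1 R, (k : ℝ) * Δx * W k) * f a by rw [Finset.sum_mul]]
    rw [hnorm, one_mul]
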